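/- arXiv:1003.1592 — 2 statements merged into one kernel-verified Lean document; each statement's English description precedes it below -/
import Mathlib

section
/- For every n ≥ 1 there exists ε₀ > 0 such that for all 0 < ε < ε₀ and all 0 < δ ≤ 1, the set D = {η ∈ ℂ : Im η > 0, |η| < δ, |η|·exp(Re(1/η^(2n))) < ε} has exactly n connected components, and the k-th component is contained in the angular sector {η : kπ/n < arg η < (k+1)π/n} for k = 0, …, n-1. -/
open Real Set Complex

noncomputable def pt (r θ : ℝ) : ℂ := (r : ℂ) * Complex.exp (θ * Complex.I)

lemma abs_pt {r : ℝ} (hr : 0 ≤ r) (θ : ℝ) : ‖pt r θ‖ = r := by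
  simp [pt, Complex.norm_exp_ofReal_mul_I, _root_.abs_of_nonneg hr]

lemma im_pt (r θ : ℝ) : (pt r θ).im = r * Real.sin θ := by
  simp [pt, Complex.exp_ofReal_mul_I_im, Complex.exp_ofReal_mul_I_re]

lemma re_pt (r θ : ℝ) : (pt r θ).re = r * Real.cos θ := by
  simp [pt, Complex.exp_ofReal_mul_I_im, Complex.exp_ofReal_mul_I_re]

lemma arg_pt {r θ : ℝ} (hr : 0 < r) (h1 : -π < θ) (h2 : θ ≤ π) : (pt r θ).arg = θ := by
  rw [pt, Complex.exp_mul_I]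
  exact Complex.arg_mul_cos_add_sin_mul_I hr ⟨h1, h2⟩

lemma pt_pow (r θ : ℝ) (m : ℕ) : (pt r θ) ^ m = pt (r ^ m) (m * θ) := by
  rw [pt, mul_pow, ← Complex.exp_nat_mul, pt]
  push_cast
  ring_nf

lemma re_inv_pow_pt {r : ℝ} (hr : 0 < r) (θ : ℝ) (m : ℕ) :
    (1 / (pt r θ) ^ m).re = Real.cos (m * θ) / r ^ m := by
  rw [pt_pow, one_div, Complex.inv_re]
  have h1 : (pt (r ^ m) (m * θ)).re = r ^ m * Real.cos (m * θ) := re_pt _ _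
  have h2 : Complex.normSq (pt (r ^ m) (m * θ)) = (r ^ m) ^ 2 := by
    rw [← Complex.sq_norm, abs_pt (by positivity)]
  rw [h1, h2]
  have : (0:ℝ) < r ^ m := by positivity
  field_simp

lemma pt_abs_arg (z : ℂ) : pt (‖z‖) z.arg = z := Complex.norm_mul_exp_arg_mul_I z

lemma g_mono_c {r c c' : ℝ} (hr : 0 ≤ r) (m : ℕ) (h : c' ≤ c) :
    r * Real.exp (c' / r ^ m) ≤ r * Real.exp (c / r ^ m) := by
  gcongr

lemma g_mono_r {r r' c : ℝ} (m : ℕ) (hc : c ≤ 0) (h0 : 0 < r') (hrr : r' ≤ r) :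
    r' * Real.exp (c / r' ^ m) ≤ r * Real.exp (c / r ^ m) := by
  have hr0 : 0 < r := h0.trans_le hrr
  have hp : (0:ℝ) < r' ^ m := by positivity
  have hp2 : (0:ℝ) < r ^ m := by positivity
  have hmono : r' ^ m ≤ r ^ m := pow_le_pow_left₀ h0.le hrr m
  have : c / r' ^ m ≤ c / r ^ m := by
    rw [div_le_div_iff₀ hp hp2]
    nlinarith
  exact mul_le_mul hrr (Real.exp_le_exp.2 this) (Real.exp_pos _).le (h0.trans_le hrr).le

lemma cos_le_on_path {k : ℕ} {φ₀ φ : ℝ} (h1 : 2*k*π < φ₀) (h2 : φ₀ < 2*k*π + 2*π)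
    (h : φ ∈ uIcc φ₀ (2*k*π + π)) : Real.cos φ ≤ Real.cos φ₀ := by
  have hπ := Real.pi_pos
  have shift : ∀ ψ : ℝ, ∀ j : ℤ, Real.cos (ψ + j*(2*π)) = Real.cos ψ :=
    fun ψ j => Real.cos_add_int_mul_two_pi ψ j
  rcases le_total φ₀ (2*k*π + π) with hA | hB
  · rw [uIcc_of_le hA] at h
    obtain ⟨ha, hb⟩ := h
    have e1 : Real.cos φ = Real.cos (φ - 2*k*π) := by
      rw [← shift (φ - 2*k*π) k]; push_cast; ring_nf
    have e2 : Real.cos φ₀ = Real.cos (φ₀ - 2*k*π) := by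
      rw [← shift (φ₀ - 2*k*π) k]; push_cast; ring_nf
    rw [e1, e2]
    exact Real.cos_le_cos_of_nonneg_of_le_pi (by linarith) (by linarith) (by linarith)
  · rw [uIcc_of_ge hB] at h
    obtain ⟨ha, hb⟩ := h
    have e1 : Real.cos φ = Real.cos (2*(k+1)*π - φ) := by
      rw [← Real.cos_neg (2*(k+1)*π - φ), ← shift (-(2*(k+1)*π - φ)) (k+1)]
      push_cast; ring_nf
    have e2 : Real.cos φ₀ = Real.cos (2*(k+1)*π - φ₀) := by
      rw [← Real.cos_neg (2*(k+1)*π - φ₀), ← shift (-(2*(k+1)*π - φ₀)) (k+1)]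
      push_cast; ring_nf
    rw [e1, e2]
    exact Real.cos_le_cos_of_nonneg_of_le_pi (by linarith) (by linarith) (by linarith)

lemma combo_mem_uIcc {a b t : ℝ} (h0 : 0 ≤ t) (h1 : t ≤ 1) :
    (1-t)*a + t*b ∈ uIcc a b := by
  rcases le_total a b with h | h
  · rw [uIcc_of_le h]; constructor <;> nlinarith
  · rw [uIcc_of_ge h]; constructor <;> nlinarith

lemma joinedIn_polar {U : Set ℂ} {r₀ r₁ θ₀ θ₁ : ℝ}
    (h : ∀ t : ℝ, 0 ≤ t → t ≤ 1 → pt ((1-t)*r₀ + t*r₁) ((1-t)*θ₀ + t*θ₁) ∈ U) :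
    JoinedIn U (pt r₀ θ₀) (pt r₁ θ₁) := by
  refine ⟨⟨⟨fun t => pt ((1-(t:ℝ))*r₀ + (t:ℝ)*r₁) ((1-(t:ℝ))*θ₀ + (t:ℝ)*θ₁), ?_⟩, ?_, ?_⟩, ?_⟩
  · unfold pt
    fun_prop
  · simp
  · simp
  · exact fun t => h t t.2.1 t.2.2

section
variable (n k : ℕ) {U : Set ℂ} {ε δ : ℝ}

lemma theta_star_mem (hn : 1 ≤ n) :
    (k:ℝ)*π/n < (2*(k:ℝ)+1)*π/(2*n) ∧ (2*(k:ℝ)+1)*π/(2*n) < ((k:ℝ)+1)*π/n := by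
  have hπ := Real.pi_pos
  have hn' : (0:ℝ) < n := by exact_mod_cast hn
  constructor <;> rw [div_lt_div_iff₀ (by positivity) (by positivity)] <;> nlinarith

lemma sector_sub (hn : 1 ≤ n) (hk : k < n) {θ : ℝ}
    (h1 : (k:ℝ)*π/n < θ) (h2 : θ < ((k:ℝ)+1)*π/n) : 0 < θ ∧ θ < π := by
  have hπ := Real.pi_pos
  have hn' : (0:ℝ) < n := by exact_mod_cast hn
  have hk' : (k:ℝ)+1 ≤ n := by exact_mod_cast hk
  constructor
  · calc (0:ℝ) ≤ (k:ℝ)*π/n := by positivity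
      _ < θ := h1
  · calc θ < ((k:ℝ)+1)*π/n := h2
      _ ≤ π := by rw [div_le_iff₀ hn']; nlinarith

lemma phi_facts (hn : 1 ≤ n) {θ : ℝ}
    (h1 : (k:ℝ)*π/n < θ) (h2 : θ < ((k:ℝ)+1)*π/n) :
    2*(k:ℝ)*π < 2*n*θ ∧ 2*n*θ < 2*(k:ℝ)*π + 2*π := by
  have hπ := Real.pi_pos
  have hn' : (0:ℝ) < n := by exact_mod_cast hn
  rw [div_lt_iff₀ hn'] at h1; rw [lt_div_iff₀ hn'] at h2
  constructor <;> nlinarith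

lemma cos_theta_path (hn : 1 ≤ n) {θ θ' : ℝ}
    (h1 : (k:ℝ)*π/n < θ) (h2 : θ < ((k:ℝ)+1)*π/n)
    (hmem : θ' ∈ uIcc θ ((2*(k:ℝ)+1)*π/(2*n))) :
    Real.cos (2*n*θ') ≤ Real.cos (2*n*θ) := by
  have hn' : (0:ℝ) < n := by exact_mod_cast hn
  obtain ⟨hφ1, hφ2⟩ := phi_facts n k hn h1 h2
  apply cos_le_on_path hφ1 hφ2
  have he : 2*(n:ℝ)*((2*(k:ℝ)+1)*π/(2*n)) = 2*(k:ℝ)*π + π := by field_simp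
  rw [← he]
  rcases mem_uIcc.1 hmem with ⟨ha, hb⟩ | ⟨ha, hb⟩
  · exact mem_uIcc.2 (Or.inl ⟨by nlinarith, by nlinarith⟩)
  · exact mem_uIcc.2 (Or.inr ⟨by nlinarith, by nlinarith⟩)

lemma cos_theta_star (hn : 1 ≤ n) :
    Real.cos (2*(n:ℝ)*((2*(k:ℝ)+1)*π/(2*n))) = -1 := by
  have hn' : (0:ℝ) < n := by exact_mod_cast hn
  have he : 2*(n:ℝ)*((2*(k:ℝ)+1)*π/(2*n)) = π + (k:ℤ)*(2*π) := by
    push_cast; field_simp; ring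
  rw [he, Real.cos_add_int_mul_two_pi, Real.cos_pi]

lemma joined_aux (hn : 1 ≤ n) (hk : k < n)
    (hmem : ∀ r θ : ℝ, 0 < r → r < δ → (k:ℝ)*π/n < θ → θ < ((k:ℝ)+1)*π/n →
       r * Real.exp (Real.cos (2*n*θ) / r^(2*n)) < ε → pt r θ ∈ U)
    {r θ : ℝ} (hr : 0 < r) (hrδ : r < δ)
    (hθ1 : (k:ℝ)*π/n < θ) (hθ2 : θ < ((k:ℝ)+1)*π/n)
    (hg : r * Real.exp (Real.cos (2*n*θ) / r^(2*n)) < ε) :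
    JoinedIn U (pt r θ) (pt r ((2*(k:ℝ)+1)*π/(2*n))) := by
  set θs : ℝ := (2*(k:ℝ)+1)*π/(2*n) with hθs
  obtain ⟨hs1, hs2⟩ := theta_star_mem n k hn
  have hsub : uIcc θ θs ⊆ Ioo ((k:ℝ)*π/n) (((k:ℝ)+1)*π/n) :=
    (Set.ordConnected_Ioo).uIcc_subset ⟨hθ1, hθ2⟩ ⟨hs1, hs2⟩
  have := joinedIn_polar (U := U) (r₀ := r) (r₁ := r) (θ₀ := θ) (θ₁ := θs) ?_
  · simpa using this
  intro t ht0 ht1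
  have hcc : (1-t)*r + t*r = r := by ring
  rw [hcc]
  set θt : ℝ := (1-t)*θ + t*θs with hθt
  have hmemI : θt ∈ uIcc θ θs := combo_mem_uIcc ht0 ht1
  obtain ⟨hi1, hi2⟩ := hsub hmemI
  apply hmem r θt hr hrδ hi1 hi2
  calc r * Real.exp (Real.cos (2*n*θt) / r^(2*n))
      ≤ r * Real.exp (Real.cos (2*n*θ) / r^(2*n)) :=
        g_mono_c hr.le _ (cos_theta_path n k hn hθ1 hθ2 hmemI)
    _ < ε := hg

lemma joined_pair (hn : 1 ≤ n) (hk : k < n)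
    (hmem : ∀ r θ : ℝ, 0 < r → r < δ → (k:ℝ)*π/n < θ → θ < ((k:ℝ)+1)*π/n →
       r * Real.exp (Real.cos (2*n*θ) / r^(2*n)) < ε → pt r θ ∈ U)
    {r₁ θ₁ r₂ θ₂ : ℝ} (hr1 : 0 < r₁) (hrδ1 : r₁ < δ)
    (ha1 : (k:ℝ)*π/n < θ₁) (hb1 : θ₁ < ((k:ℝ)+1)*π/n)
    (hg1 : r₁ * Real.exp (Real.cos (2*n*θ₁) / r₁^(2*n)) < ε)
    (hr2 : 0 < r₂) (hrδ2 : r₂ < δ)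
    (ha2 : (k:ℝ)*π/n < θ₂) (hb2 : θ₂ < ((k:ℝ)+1)*π/n)
    (hg2 : r₂ * Real.exp (Real.cos (2*n*θ₂) / r₂^(2*n)) < ε) :
    JoinedIn U (pt r₁ θ₁) (pt r₂ θ₂) := by
  set θs : ℝ := (2*(k:ℝ)+1)*π/(2*n) with hθs
  have hcs : Real.cos (2*(n:ℝ)*θs) = -1 := cos_theta_star n k hn
  obtain ⟨hs1, hs2⟩ := theta_star_mem n k hn
  have hgs1 : r₁ * Real.exp (Real.cos (2*n*θs) / r₁^(2*n)) < ε :=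
    lt_of_le_of_lt (g_mono_c hr1.le _ (cos_theta_path n k hn ha1 hb1 right_mem_uIcc)) hg1
  have hgs2 : r₂ * Real.exp (Real.cos (2*n*θs) / r₂^(2*n)) < ε :=
    lt_of_le_of_lt (g_mono_c hr2.le _ (cos_theta_path n k hn ha2 hb2 right_mem_uIcc)) hg2
  have j1 : JoinedIn U (pt r₁ θ₁) (pt r₁ θs) :=
    joined_aux n k hn hk hmem hr1 hrδ1 ha1 hb1 hg1
  have j3 : JoinedIn U (pt r₂ θ₂) (pt r₂ θs) :=
    joined_aux n k hn hk hmem hr2 hrδ2 ha2 hb2 hg2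
  have j2 : JoinedIn U (pt r₁ θs) (pt r₂ θs) := by
    have := joinedIn_polar (U := U) (r₀ := r₁) (r₁ := r₂) (θ₀ := θs) (θ₁ := θs) ?_
    · simpa using this
    intro t ht0 ht1
    have hcc : (1-t)*θs + t*θs = θs := by ring
    rw [hcc]
    set rt : ℝ := (1-t)*r₁ + t*r₂ with hrt
    have hmemI : rt ∈ uIcc r₁ r₂ := combo_mem_uIcc ht0 ht1
    rw [mem_uIcc] at hmemI
    have hrt0 : 0 < rt := by rcases hmemI with ⟨h,_⟩|⟨h,_⟩ <;> linarith
    have hrtδ : rt < δ := by rcases hmemI with ⟨_,h⟩|⟨_,h⟩ <;> linarith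
    apply hmem rt θs hrt0 hrtδ hs1 hs2
    have hc0 : Real.cos (2*(n:ℝ)*θs) ≤ 0 := by rw [hcs]; norm_num
    rcases hmemI with ⟨h1,h2⟩|⟨h1,h2⟩
    · exact lt_of_le_of_lt (g_mono_r (2*n) hc0 hrt0 h2) hgs2
    · exact lt_of_le_of_lt (g_mono_r (2*n) hc0 hrt0 h2) hgs1
  exact (j1.trans j2).trans j3.symm

end

set_option maxHeartbeats 1000000 in
theorem stmt14 (n : ℕ) (hn : 1 ≤ n) :
    ∃ ε₀ > 0, ∀ ε : ℝ, 0 < ε → ε < ε₀ → ∀ δ : ℝ, 0 < δ → δ ≤ 1 →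
      ∀ D : Set ℂ,
        D = {η : ℂ | 0 < η.im ∧ ‖η‖ < δ ∧
              ‖η‖ * Real.exp ((1 / η ^ (2 * n)).re) < ε} →
        Nat.card (ConnectedComponents D) = n ∧
        ∀ x ∈ D, ∃ k : ℕ, k < n ∧
          connectedComponentIn D x ⊆
            {η : ℂ | k * π / n < Complex.arg η ∧ Complex.arg η < (k + 1) * π / n} := by
  refine ⟨1, one_pos, ?_⟩
  intro ε hε hε1 δ hδ0 hδ1 D hD
  have hπ := Real.pi_pos
  have hn' : (0:ℝ) < n := by exact_mod_cast hn
  have hcast : ((2*n : ℕ) : ℝ) = 2*(n:ℝ) := by push_cast; ring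
  -- sufficient condition for membership in D
  have hmemD : ∀ r θ : ℝ, 0 < r → r < δ → 0 < Real.sin θ →
      r * Real.exp (Real.cos (2*(n:ℝ)*θ) / r^(2*n)) < ε → pt r θ ∈ D := by
    intro r θ h1 h2 h3 h4
    rw [hD, mem_setOf_eq, abs_pt h1.le, im_pt]
    refine ⟨mul_pos h1 h3, h2, ?_⟩
    rw [re_inv_pow_pt h1 θ (2*n), hcast]
    exact h4
  -- decomposition of members of D
  have hdec : ∀ η ∈ D, ∃ k : ℕ, k < n ∧ 0 < ‖η‖ ∧ ‖η‖ < δ ∧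
      (k:ℝ)*π/n < Complex.arg η ∧ Complex.arg η < ((k:ℝ)+1)*π/n ∧
      ‖η‖ * Real.exp (Real.cos (2*(n:ℝ)*Complex.arg η) / (‖η‖)^(2*n)) < ε ∧
      η = pt (‖η‖) (Complex.arg η) := by
    intro η hη
    rw [hD, mem_setOf_eq] at hη
    obtain ⟨h1, h2, h3⟩ := hη
    have hη0 : η ≠ 0 := by intro h; rw [h] at h1; simp at h1
    have hr : 0 < ‖η‖ := norm_pos_iff.mpr hη0
    have hpt : η = pt (‖η‖) (Complex.arg η) := (pt_abs_arg η).symm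
    have hg : ‖η‖ * Real.exp (Real.cos (2*(n:ℝ)*Complex.arg η) / (‖η‖)^(2*n)) < ε := by
      calc ‖η‖ * Real.exp (Real.cos (2*(n:ℝ)*Complex.arg η) / (‖η‖)^(2*n))
          = ‖η‖ * Real.exp ((1 / η ^ (2*n)).re) := by
            rw [show (1 / η ^ (2*n)).re = (1 / (pt (‖η‖) (Complex.arg η)) ^ (2*n)).re by rw [← hpt],
              re_inv_pow_pt hr _ (2*n), hcast]
        _ < ε := h3
    -- θ ∈ (0, π)
    have hθ0 : 0 < Complex.arg η := by
      rcases lt_or_eq_of_le (Complex.arg_nonneg_iff.2 h1.le) with h | h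
      · exact h
      · exfalso
        have := Complex.arg_eq_zero_iff.1 h.symm
        exact absurd this.2 h1.ne'
    have hθπ : Complex.arg η < π := Complex.arg_lt_pi_iff.2 (Or.inr h1.ne')
    -- η avoids the rays arg = j*π/n
    have hray : ∀ j : ℕ, Complex.arg η ≠ (j:ℝ)*π/n := by
      intro j hj
      have hc1 : Real.cos (2*(n:ℝ)*Complex.arg η) = 1 := by
        rw [hj, show 2*(n:ℝ)*((j:ℝ)*π/n) = (j:ℝ)*(2*π) by field_simp]
        exact Real.cos_nat_mul_two_pi j
      rw [hc1] at hg
      have hrle1 : ‖η‖ ≤ 1 := le_trans h2.le hδ1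
      have hpow : (‖η‖)^(2*n) ≤ ‖η‖ := by
        calc (‖η‖)^(2*n) ≤ (‖η‖)^1 :=
              pow_le_pow_of_le_one hr.le hrle1 (by omega)
          _ = ‖η‖ := pow_one _
      have hppos : (0:ℝ) < (‖η‖)^(2*n) := by positivity
      have hdiv : 1 / ‖η‖ ≤ 1 / (‖η‖)^(2*n) :=
        one_div_le_one_div_of_le hppos hpow
      have hexp : 1 / (‖η‖)^(2*n) + 1 ≤ Real.exp (1 / (‖η‖)^(2*n)) :=
        Real.add_one_le_exp _
      have h1r : ‖η‖ * (1 / ‖η‖) = 1 := by field_simp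
      nlinarith [mul_le_mul_of_nonneg_left hexp hr.le,
        mul_le_mul_of_nonneg_left hdiv hr.le]
    -- find the sector index
    set k : ℕ := ⌊Complex.arg η * n / π⌋₊ with hkdef
    have hx0 : 0 ≤ Complex.arg η * n / π := by positivity
    have hkn : k < n := by
      rw [hkdef, Nat.floor_lt hx0]
      rw [div_lt_iff₀ hπ]
      nlinarith
    have hk1 : (k:ℝ) ≤ Complex.arg η * n / π := Nat.floor_le hx0
    have hk2 : Complex.arg η * n / π < (k:ℝ) + 1 := Nat.lt_floor_add_one _
    have hb1 : (k:ℝ)*π/n ≤ Complex.arg η := by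
      rw [div_le_iff₀ hn']
      rw [le_div_iff₀ hπ] at hk1
      linarith
    have hb2 : Complex.arg η < ((k:ℝ)+1)*π/n := by
      rw [lt_div_iff₀ hn']
      rw [div_lt_iff₀ hπ] at hk2
      linarith
    exact ⟨k, hkn, hr, h2, lt_of_le_of_ne hb1 (Ne.symm (hray k)), hb2, hg, hpt⟩
  -- the sectors
  set S : ℕ → Set ℂ := fun k =>
    {η : ℂ | (k:ℝ) * π / n < Complex.arg η ∧ Complex.arg η < ((k:ℝ) + 1) * π / n} with hSdef
  have hS_disj : ∀ j k : ℕ, j ≠ k → Disjoint (S j) (S k) := by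
    intro j k hjk
    rw [Set.disjoint_left]
    rintro z ⟨hj1, hj2⟩ ⟨hk1, hk2⟩
    rcases lt_or_gt_of_ne hjk with h | h
    · have : (j:ℝ) + 1 ≤ k := by exact_mod_cast h
      have : ((j:ℝ)+1)*π/n ≤ (k:ℝ)*π/n := by
        gcongr
      linarith
    · have : (k:ℝ) + 1 ≤ j := by exact_mod_cast h
      have : ((k:ℝ)+1)*π/n ≤ (j:ℝ)*π/n := by
        gcongr
      linarith
  have im_pos_of_sector : ∀ k : ℕ, k < n → ∀ z ∈ S k, 0 < z.im := by
    intro k hkn z hz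
    obtain ⟨h1, h2⟩ := hz
    have h0 : 0 < Complex.arg z := lt_of_le_of_lt (by positivity) h1
    have hπ' : Complex.arg z < π := by
      have hk' : (k:ℝ)+1 ≤ n := by exact_mod_cast hkn
      calc Complex.arg z < ((k:ℝ)+1)*π/n := h2
        _ ≤ π := by rw [div_le_iff₀ hn']; nlinarith
    have him : 0 ≤ z.im := Complex.arg_nonneg_iff.1 h0.le
    rcases lt_or_eq_of_le him with h | h
    · exact h
    · exfalso
      rcases le_or_gt 0 z.re with hre | hre
      · exact h0.ne' (Complex.arg_eq_zero_iff.2 ⟨hre, h.symm⟩)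
      · exact hπ'.ne (Complex.arg_eq_pi_iff.2 ⟨hre, h.symm⟩)
  have hS_open : ∀ k : ℕ, k < n → IsOpen (S k) := by
    intro k hkn
    rw [isOpen_iff_mem_nhds]
    intro z hz
    have him := im_pos_of_sector k hkn z hz
    have hca : ContinuousAt Complex.arg z :=
      Complex.continuousAt_arg (Or.inr him.ne')
    exact hca.preimage_mem_nhds (Ioo_mem_nhds hz.1 hz.2)
  -- D is open
  have hD_open : IsOpen D := by
    rw [isOpen_iff_mem_nhds]
    intro z hz
    have hz' := hz
    rw [hD, mem_setOf_eq] at hz'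
    obtain ⟨h1, h2, h3⟩ := hz'
    have hz0 : z ≠ 0 := by intro h; rw [h] at h1; simp at h1
    have hc3 : ContinuousAt (fun η : ℂ => ‖η‖ * Real.exp ((1/η^(2*n)).re)) z := by
      apply ContinuousAt.mul continuous_norm.continuousAt
      apply Real.continuous_exp.continuousAt.comp
      apply Complex.continuous_re.continuousAt.comp
      exact ContinuousAt.div continuousAt_const ((continuous_pow (2*n)).continuousAt)
        (pow_ne_zero _ hz0)
    have m1 : {η : ℂ | 0 < η.im} ∈ nhds z :=
      Complex.continuous_im.continuousAt.preimage_mem_nhds (Ioi_mem_nhds h1)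
    have m2 : {η : ℂ | ‖η‖ < δ} ∈ nhds z :=
      continuous_norm.continuousAt.preimage_mem_nhds (Iio_mem_nhds h2)
    have m3 : {η : ℂ | ‖η‖ * Real.exp ((1/η^(2*n)).re) < ε} ∈ nhds z :=
      hc3.preimage_mem_nhds (Iio_mem_nhds h3)
    rw [hD]
    filter_upwards [m1, m2, m3] with η ha hb hc
    exact ⟨ha, hb, hc⟩
  -- witnesses in every sector
  set r₀ : ℝ := min δ ε / 2 with hr₀def
  set θs : ℕ → ℝ := fun k => (2*(k:ℝ)+1)*π/(2*n) with hθsdef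
  have hr₀pos : 0 < r₀ := by
    rw [hr₀def]; positivity
  have hr₀δ : r₀ < δ := by
    rw [hr₀def]
    have : min δ ε ≤ δ := min_le_left _ _
    linarith
  have hr₀ε : r₀ < ε := by
    rw [hr₀def]
    have : min δ ε ≤ ε := min_le_right _ _
    linarith
  have hw : ∀ k : ℕ, k < n → pt r₀ (θs k) ∈ D ∩ S k := by
    intro k hkn
    obtain ⟨hs1, hs2⟩ := theta_star_mem n k hn
    obtain ⟨hp1, hp2⟩ := sector_sub n k hn hkn hs1 hs2
    have hgw : r₀ * Real.exp (Real.cos (2*(n:ℝ)*(θs k)) / r₀^(2*n)) < ε := by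
      rw [hθsdef]
      rw [cos_theta_star n k hn]
      have hle : Real.exp (-1 / r₀^(2*n)) ≤ 1 := by
        rw [Real.exp_le_one_iff]
        have : (0:ℝ) < r₀^(2*n) := by positivity
        apply div_nonpos_of_nonpos_of_nonneg <;> linarith
      nlinarith [hr₀pos]
    refine ⟨hmemD r₀ (θs k) hr₀pos hr₀δ (Real.sin_pos_of_pos_of_lt_pi hp1 hp2) hgw, ?_⟩
    have harg : (pt r₀ (θs k)).arg = θs k := arg_pt hr₀pos (by linarith) hp2.le
    exact ⟨by rw [harg]; exact hs1, by rw [harg]; exact hs2⟩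
  -- membership condition for D ∩ S k
  have hmemC : ∀ k : ℕ, k < n → ∀ r θ : ℝ, 0 < r → r < δ →
      (k:ℝ)*π/n < θ → θ < ((k:ℝ)+1)*π/n →
      r * Real.exp (Real.cos (2*(n:ℝ)*θ) / r^(2*n)) < ε → pt r θ ∈ D ∩ S k := by
    intro k hkn r θ h1 h2 h3 h4 h5
    obtain ⟨hp1, hp2⟩ := sector_sub n k hn hkn h3 h4
    refine ⟨hmemD r θ h1 h2 (Real.sin_pos_of_pos_of_lt_pi hp1 hp2) h5, ?_⟩
    have harg : (pt r θ).arg = θ := arg_pt h1 (by linarith) hp2.le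
    exact ⟨by rw [harg]; exact h3, by rw [harg]; exact h4⟩
  -- each D ∩ S k is path connected
  have hC_path : ∀ k : ℕ, k < n → ∀ y ∈ D ∩ S k,
      JoinedIn (D ∩ S k) (pt r₀ (θs k)) y := by
    intro k hkn y hy
    obtain ⟨hyD, hyS⟩ := hy
    obtain ⟨k', hk', hr, hrδ, _, _, hg, hyeq⟩ := hdec y hyD
    obtain ⟨ha', hb'⟩ := hyS
    obtain ⟨hs1, hs2⟩ := theta_star_mem n k hn
    have hgw : r₀ * Real.exp (Real.cos (2*(n:ℝ)*(θs k)) / r₀^(2*n)) < ε := by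
      rw [hθsdef, cos_theta_star n k hn]
      have hle : Real.exp (-1 / r₀^(2*n)) ≤ 1 := by
        rw [Real.exp_le_one_iff]
        have : (0:ℝ) < r₀^(2*n) := by positivity
        apply div_nonpos_of_nonpos_of_nonneg <;> linarith
      nlinarith [hr₀pos]
    have := joined_pair n k hn hkn (hmemC k hkn) hr₀pos hr₀δ hs1 hs2 hgw
      hr hrδ ha' hb' hg
    rw [← hyeq] at this
    exact this
  -- connected components are contained in sectors
  have hsub : ∀ k : ℕ, k < n → ∀ x ∈ D ∩ S k, connectedComponentIn D x ⊆ D ∩ S k := by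
    intro k hkn x hx
    have hpre : IsPreconnected (connectedComponentIn D x) := isPreconnected_connectedComponentIn
    set V : Set ℂ := ⋃ j ∈ {j : ℕ | j < n ∧ j ≠ k}, S j with hVdef
    have hVopen : IsOpen V := isOpen_biUnion fun j hj => hS_open j hj.1
    have hdisj : Disjoint (S k) V := by
      rw [Set.disjoint_left]
      intro z hzS hzV
      rw [hVdef, mem_iUnion₂] at hzV
      obtain ⟨j, ⟨hj1, hj2⟩, hzj⟩ := hzV
      exact Set.disjoint_left.1 (hS_disj k j (Ne.symm hj2)) hzS hzj
    have hcover : D ⊆ S k ∪ V := by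
      intro z hzD
      obtain ⟨k', hk', _, _, ha, hb, _, _⟩ := hdec z hzD
      by_cases hkk : k' = k
      · left; rw [← hkk]; exact ⟨ha, hb⟩
      · right; rw [hVdef, mem_iUnion₂]; exact ⟨k', ⟨hk', hkk⟩, ha, hb⟩
    have hsu : (connectedComponentIn D x ∩ S k).Nonempty :=
      ⟨x, mem_connectedComponentIn hx.1, hx.2⟩
    have h1 := hpre.subset_left_of_subset_union (hS_open k hkn) hVopen hdisj
      ((connectedComponentIn_subset D x).trans hcover) hsu
    exact subset_inter (connectedComponentIn_subset D x) h1
  constructor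
  · -- counting the components
    set w : Fin n → ↥D := fun k => ⟨pt r₀ (θs k.1), (hw k.1 k.2).1⟩ with hwdef
    set gmap : Fin n → ConnectedComponents ↥D := fun k => ConnectedComponents.mk (w k)
      with hgdef
    have hinj : Function.Injective gmap := by
      intro j k h
      rw [hgdef] at h
      simp only [ConnectedComponents.coe_eq_coe] at h
      have hmem1 : (w j : ℂ) ∈ connectedComponentIn D (pt r₀ (θs k.1)) := by
        rw [connectedComponentIn_eq_image (hw k.1 k.2).1]
        exact ⟨w j, by rw [← h]; exact mem_connectedComponent, rfl⟩
      have hj : (pt r₀ (θs j.1)) ∈ D ∩ S k.1 :=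
        hsub k.1 k.2 _ (hw k.1 k.2) hmem1
      by_contra hne
      have hne' : j.1 ≠ k.1 := fun hh => hne (Fin.ext hh)
      exact Set.disjoint_left.1 (hS_disj j.1 k.1 hne') (hw j.1 j.2).2 hj.2
    have hsurj : Function.Surjective gmap := by
      intro c
      obtain ⟨y, rfl⟩ := ConnectedComponents.surjective_coe c
      obtain ⟨k, hkn, hr, hrδ, ha, hb, hgy, hyeq⟩ := hdec y.1 y.2
      obtain ⟨hs1, hs2⟩ := theta_star_mem n k hn
      have hgw : r₀ * Real.exp (Real.cos (2*(n:ℝ)*(θs k)) / r₀^(2*n)) < ε := by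
        rw [hθsdef, cos_theta_star n k hn]
        have hle : Real.exp (-1 / r₀^(2*n)) ≤ 1 := by
          rw [Real.exp_le_one_iff]
          have : (0:ℝ) < r₀^(2*n) := by positivity
          apply div_nonpos_of_nonpos_of_nonneg <;> linarith
        nlinarith [hr₀pos]
      have hmemDonly : ∀ r θ : ℝ, 0 < r → r < δ → (k:ℝ)*π/n < θ → θ < ((k:ℝ)+1)*π/n →
          r * Real.exp (Real.cos (2*(n:ℝ)*θ) / r^(2*n)) < ε → pt r θ ∈ D := by
        intro r θ h1 h2 h3 h4 h5
        obtain ⟨hp1, hp2⟩ := sector_sub n k hn hkn h3 h4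
        exact hmemD r θ h1 h2 (Real.sin_pos_of_pos_of_lt_pi hp1 hp2) h5
      have hjoin : JoinedIn D (pt r₀ (θs k)) (pt (‖y.1‖) (Complex.arg y.1)) :=
        joined_pair n k hn hkn hmemDonly hr₀pos hr₀δ hs1 hs2 hgw hr hrδ ha hb hgy
      rw [← hyeq] at hjoin
      have hjsub := hjoin.joined_subtype
      refine ⟨⟨k, hkn⟩, ?_⟩
      rw [hgdef]
      simp only [ConnectedComponents.coe_eq_coe]
      apply connectedComponent_eq
      exact pathComponent_subset_component _ hjsub
    exact Nat.card_eq_of_equiv_fin (Equiv.ofBijective gmap ⟨hinj, hsurj⟩).symm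
  · -- sector containment of components
    intro x hx
    obtain ⟨k, hkn, _, _, ha, hb, _, _⟩ := hdec x hx
    refine ⟨k, hkn, ?_⟩
    intro z hz
    have := hsub k hkn x ⟨hx, ha, hb⟩ hz
    exact this.2
end

section
/- Let D ⊂ ℂ be the open unit disc and U ⊂ ℂ open. Let G : D × U → ℂ be such that (i) z ↦ G(c, z) is holomorphic on U for every c ∈ D, (ii) c ↦ G(c, z) is continuous on D for every z ∈ U, and (iii) there is a nonempty open subset V ⊂ U such that c ↦ G(c, z) is holomorphic on D for every z ∈ V. If U is connected, then c ↦ G(c, z) is holomorphic on D for every z ∈ U. -/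
set_option maxHeartbeats 1000000

open Set Complex Metric intervalIntegral Filter

lemma paramCircleDiff {s : Set ℂ} (hs : IsOpen s) {z₁ : ℂ} {ρ : ℝ} (hρ : 0 < ρ)
    (K : ℂ → ℂ → ℂ)
    (hK : ContinuousOn (fun p : ℂ × ℂ => K p.1 p.2) (s ×ˢ sphere z₁ ρ))
    (hKc : ∀ w ∈ sphere z₁ ρ, DifferentiableOn ℂ (fun c => K c w) s) :
    DifferentiableOn ℂ (fun c => ∮ w in C(z₁, ρ), K c w) s := by
  intro c₀ hc₀
  -- continuity of c ↦ K c w etc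
  have hmem : ∀ θ : ℝ, circleMap z₁ ρ θ ∈ sphere z₁ ρ := circleMap_mem_sphere z₁ hρ.le
  have hKcont : ∀ c ∈ s, Continuous fun θ : ℝ => K c (circleMap z₁ ρ θ) := by
    intro c hc
    have h1 : ContinuousOn (fun w => K c w) (sphere z₁ ρ) := by
      have := hK.comp (f := fun w : ℂ => ((c, w) : ℂ × ℂ))
        (continuous_const.prodMk continuous_id).continuousOn
        (fun w hw => mk_mem_prod hc hw)
      exact this
    exact h1.comp_continuous (continuous_circleMap _ _) hmem
  have hFc : ∀ c ∈ s, Continuous fun θ : ℝ =>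
      deriv (circleMap z₁ ρ) θ • K c (circleMap z₁ ρ θ) := by
    intro c hc
    simp only [deriv_circleMap]
    exact ((continuous_circleMap 0 ρ).mul continuous_const).smul (hKcont c hc)
  -- radii
  obtain ⟨r, hr, hrs⟩ : ∃ r > 0, closedBall c₀ r ⊆ s :=
    (Metric.nhds_basis_closedBall.mem_iff).1 (hs.mem_nhds hc₀)
  set ε := r / 3 with hε
  have hε0 : 0 < ε := by positivity
  have hball : ∀ c ∈ ball c₀ ε, closedBall c ε ⊆ s := by
    intro c hc x hx
    apply hrs
    simp only [mem_closedBall] at *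
    have := mem_ball.1 hc
    calc dist x c₀ ≤ dist x c + dist c c₀ := dist_triangle _ _ _
      _ ≤ ε + ε := by gcongr
      _ ≤ r := by have h3 : ε = r / 3 := rfl; rw [h3]; linarith
  -- bound M on compact set
  obtain ⟨M, hM⟩ : ∃ M, ∀ p ∈ closedBall c₀ r ×ˢ sphere z₁ ρ, ‖K p.1 p.2‖ ≤ M := by
    rcases ((isCompact_closedBall c₀ r).prod (isCompact_sphere z₁ ρ)).exists_bound_of_continuousOn
      (hK.mono (prod_mono hrs Subset.rfl)) with ⟨M, hM⟩
    exact ⟨M, hM⟩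
  -- the derivative function
  set F : ℂ → ℝ → ℂ := fun c θ => deriv (circleMap z₁ ρ) θ • K c (circleMap z₁ ρ θ) with hF
  set F' : ℂ → ℝ → ℂ := fun c θ =>
    deriv (circleMap z₁ ρ) θ • deriv (fun c' => K c' (circleMap z₁ ρ θ)) c with hF'
  have hdiff : ∀ (θ : ℝ), ∀ c ∈ ball c₀ ε, HasDerivAt (fun c => F c θ) (F' c θ) c := by
    intro θ c hc
    have hcs : c ∈ s := hball c hc (mem_closedBall_self hε0.le)
    have := ((hKc _ (hmem θ) c hcs).differentiableAt (hs.mem_nhds hcs)).hasDerivAt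
    simpa only [smul_eq_mul, hF, hF'] using this.const_mul (deriv (circleMap z₁ ρ) θ)
  have hbound : ∀ (θ : ℝ), ∀ c ∈ ball c₀ ε, ‖F' c θ‖ ≤ ρ * (M / ε) := by
    intro θ c hc
    have hcball := hball c hc
    have hd : DiffContOnCl ℂ (fun c' => K c' (circleMap z₁ ρ θ)) (ball c ε) := by
      refine DifferentiableOn.diffContOnCl ?_
      exact ((hKc _ (hmem θ)).mono (closure_ball_subset_closedBall.trans hcball))
    have hC : ∀ x ∈ sphere c ε, ‖K x (circleMap z₁ ρ θ)‖ ≤ M := by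
      intro x hx
      refine hM (x, _) (mk_mem_prod ?_ (hmem θ))
      have hxc : dist x c = ε := mem_sphere_iff_norm.1 hx ▸ by
        simpa [dist_eq_norm] using mem_sphere_iff_norm.1 hx
      have : dist x c₀ ≤ dist x c + dist c c₀ := dist_triangle _ _ _
      have h2 := (mem_ball.1 hc).le
      simp only [mem_closedBall]
      calc dist x c₀ ≤ dist x c + dist c c₀ := dist_triangle _ _ _
        _ ≤ ε + ε := by rw [hxc]; gcongr
        _ ≤ r := by have h3 : ε = r / 3 := rfl; rw [h3]; linarith
    have hder := Complex.norm_deriv_le_of_forall_mem_sphere_norm_le hε0 hd hC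
    have hcm : ‖deriv (circleMap z₁ ρ) θ‖ = ρ := by
      simp [deriv_circleMap, norm_smul, abs_of_pos hρ, norm_circleMap_zero,
        _root_.abs_of_pos hρ]
    calc ‖F' c θ‖ = ‖deriv (circleMap z₁ ρ) θ‖ * ‖deriv (fun c' => K c' (circleMap z₁ ρ θ)) c‖ :=
          norm_smul _ _
      _ ≤ ρ * (M / ε) := by rw [hcm]; gcongr
  have hF'meas : MeasureTheory.AEStronglyMeasurable (F' c₀)
      (MeasureTheory.volume.restrict (Set.uIoc (0:ℝ) (2*Real.pi))) := by
    set t : ℕ → ℝ := fun n => (ε / 2) / (n + 1) with ht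
    have ht0 : ∀ n, 0 < t n := fun n => by positivity
    have htε : ∀ n, (c₀ + (t n : ℂ)) ∈ ball c₀ ε := by
      intro n
      simp only [mem_ball, dist_eq_norm, add_sub_cancel_left]
      rw [Complex.norm_real, Real.norm_eq_abs]
      rw [abs_of_pos (ht0 n), ht]
      have : (0:ℝ) < n + 1 := by positivity
      rw [div_lt_iff₀ this]
      nlinarith [ht0 n, hε0]
    have hcn : Tendsto (fun n : ℕ => c₀ + (t n : ℂ)) atTop (nhdsWithin c₀ {c₀}ᶜ) := by
      apply tendsto_nhdsWithin_of_tendsto_nhds_of_eventually_within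
      · have : Tendsto t atTop (nhds 0) := by
          have h := (tendsto_const_div_atTop_nhds_zero_nat (ε / 2)).comp
            (tendsto_add_atTop_nat 1)
          rw [ht]
          convert h using 2 with n
          simp only [Function.comp_apply]
          push_cast
          ring
        have h2 : Tendsto (fun n : ℕ => (t n : ℂ)) atTop (nhds 0) := by
          exact_mod_cast (Complex.continuous_ofReal.tendsto 0).comp this
        simpa using tendsto_const_nhds.add h2
      · filter_upwards with n
        simp only [mem_compl_iff, mem_singleton_iff]
        intro h
        have : (t n : ℂ) = 0 := by linear_combination h
        exact (ht0 n).ne' (by exact_mod_cast this)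
    apply aestronglyMeasurable_of_tendsto_ae (u := atTop)
      (f := fun (n : ℕ) θ => slope (fun c => F c θ) c₀ (c₀ + (t n : ℂ)))
    · intro n
      apply Continuous.aestronglyMeasurable
      have h1 := hFc _ (hball _ (htε n) (mem_closedBall_self hε0.le))
      have h0 := hFc _ hc₀
      unfold slope
      simp only [vsub_eq_sub, smul_eq_mul]
      exact continuous_const.mul (h1.sub h0)
    · filter_upwards with θ
      have := hasDerivAt_iff_tendsto_slope.1 (hdiff θ c₀ (mem_ball_self hε0))
      exact this.comp hcn
  have key := intervalIntegral.hasDerivAt_integral_of_dominated_loc_of_deriv_le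
    (μ := MeasureTheory.volume) (a := (0:ℝ)) (b := 2*Real.pi) (F := F) (F' := F')
    (bound := fun _ => ρ * (M / ε)) (ball_mem_nhds c₀ hε0)
    (by
      filter_upwards [hs.mem_nhds hc₀] with c hc
      exact ((hFc c hc)).aestronglyMeasurable)
    ((hFc c₀ hc₀).intervalIntegrable _ _)
    hF'meas
    (by filter_upwards with θ _ c hc using hbound θ c hc)
    (intervalIntegrable_const)
    (by filter_upwards with θ _ c hc using hdiff θ c hc)
  have : HasDerivAt (fun c => ∮ w in C(z₁, ρ), K c w) (∫ θ in (0:ℝ)..2*Real.pi, F' c₀ θ) c₀ := by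
    simpa only [circleIntegral] using key.2
  exact this.differentiableAt.differentiableWithinAt

lemma stepLemma {U D : Set ℂ} (hU : IsOpen U) (hDo : IsOpen D)
    {G : ℂ → ℂ → ℂ}
    (hcont : ContinuousOn (fun p : ℂ × ℂ => G p.1 p.2) (D ×ˢ U))
    (hholz : ∀ c ∈ D, DifferentiableOn ℂ (G c) U)
    {z₁ : ℂ} {ρ R : ℝ} (hρ : 0 < ρ) (hρR : ρ < R)
    (hRU : closedBall z₁ R ⊆ U)
    (hsmall : ∀ w ∈ ball z₁ ρ, DifferentiableOn ℂ (fun c => G c w) D) :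
    ∀ z ∈ ball z₁ R, DifferentiableOn ℂ (fun c => G c z) D := by
  intro z hz c₀ hc₀
  have hR : 0 < R := hρ.trans hρR
  set ρ' : ℝ := ρ / 2 with hρ'def
  have hρ'0 : 0 < ρ' := by positivity
  have hρ'ρ : ρ' < ρ := by rw [hρ'def]; linarith
  have hsphsub : sphere z₁ ρ' ⊆ ball z₁ ρ := fun w hw => by
    simp only [mem_sphere_iff_norm] at hw
    simp only [mem_ball, dist_eq_norm]
    rw [hw]; exact hρ'ρ
  have hsphU : sphere z₁ ρ' ⊆ U := fun w hw => hRU (by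
    have := hsphsub hw
    exact closedBall_subset_closedBall hρR.le (ball_subset_closedBall this))
  set Rn : NNReal := R.toNNReal with hRn
  set ρn : NNReal := ρ'.toNNReal with hρn
  have hRcoe : (Rn : ℝ) = R := Real.coe_toNNReal R hR.le
  have hρcoe : (ρn : ℝ) = ρ' := Real.coe_toNNReal ρ' hρ'0.le
  have hRn0 : 0 < Rn := by rw [← NNReal.coe_lt_coe, hRcoe]; exact hR
  have hρn0 : 0 < ρn := by rw [← NNReal.coe_lt_coe, hρcoe]; exact hρ'0
  have hbig : ∀ c ∈ D, HasFPowerSeriesOnBall (G c) (cauchyPowerSeries (G c) z₁ R) z₁ Rn := by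
    intro c hc
    have h := DifferentiableOn.hasFPowerSeriesOnBall (R := Rn) (f := G c) (c := z₁)
      ((hholz c hc).mono (by rw [hRcoe]; exact hRU)) hRn0
    rwa [hRcoe] at h
  have hsm : ∀ c ∈ D, HasFPowerSeriesOnBall (G c) (cauchyPowerSeries (G c) z₁ ρ') z₁ ρn := by
    intro c hc
    have h := DifferentiableOn.hasFPowerSeriesOnBall (R := ρn) (f := G c) (c := z₁)
      ((hholz c hc).mono (by
        rw [hρcoe]
        exact (closedBall_subset_closedBall (by linarith)).trans hRU)) hρn0
    rwa [hρcoe] at h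
  have hps : ∀ c ∈ D, cauchyPowerSeries (G c) z₁ R = cauchyPowerSeries (G c) z₁ ρ' :=
    fun c hc => (hbig c hc).hasFPowerSeriesAt.eq_formalMultilinearSeries
      (hsm c hc).hasFPowerSeriesAt
  set f : ℕ → ℂ → ℂ := fun n c => cauchyPowerSeries (G c) z₁ ρ' n (fun _ => z - z₁) with hf
  have hGz : ∀ c ∈ D, HasSum (fun n => f n c) (G c z) := by
    intro c hc
    have hmem : z ∈ Metric.eball z₁ (Rn : ENNReal) := by
      rw [Metric.emetric_ball_nnreal, hRcoe]
      exact hz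
    have := (hbig c hc).hasSum_sub hmem
    rwa [hps c hc] at this
  have hfd : ∀ n, DifferentiableOn ℂ (f n) D := by
    intro n
    have hne : ∀ w ∈ sphere z₁ ρ', w - z₁ ≠ 0 := by
      intro w hw
      simp only [mem_sphere_iff_norm] at hw
      intro h
      rw [h, norm_zero] at hw
      exact hρ'0.ne hw
    have heq : f n = fun c => (2 * Real.pi * I : ℂ)⁻¹ •
        ∮ w in C(z₁, ρ'), ((z - z₁) / (w - z₁)) ^ n • (w - z₁)⁻¹ • G c w :=
      funext fun c => cauchyPowerSeries_apply (G c) z₁ ρ' n (z - z₁)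
    rw [heq]
    apply DifferentiableOn.fun_const_smul
    apply paramCircleDiff hDo hρ'0
    · -- continuity
      have hsub : ContinuousOn (fun p : ℂ × ℂ => p.2 - z₁) (D ×ˢ sphere z₁ ρ') :=
        (continuous_snd.sub continuous_const).continuousOn
      have hne' : ∀ p ∈ D ×ˢ sphere z₁ ρ', p.2 - z₁ ≠ 0 := fun p hp => hne _ hp.2
      have hGc : ContinuousOn (fun p : ℂ × ℂ => G p.1 p.2) (D ×ˢ sphere z₁ ρ') :=
        hcont.mono (prod_mono Subset.rfl hsphU)
      have h1 : ContinuousOn (fun p : ℂ × ℂ => ((z - z₁) / (p.2 - z₁)) ^ n)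
          (D ×ˢ sphere z₁ ρ') := (continuousOn_const.div hsub hne').pow n
      have h2 : ContinuousOn (fun p : ℂ × ℂ => (p.2 - z₁)⁻¹ • G p.1 p.2)
          (D ×ˢ sphere z₁ ρ') := (hsub.inv₀ hne').smul hGc
      exact h1.smul h2
    · intro w hw
      have := hsmall w (hsphsub hw)
      have h1 : DifferentiableOn ℂ (fun c => (w - z₁)⁻¹ • G c w) D := this.fun_const_smul _
      exact h1.fun_const_smul _
  -- local uniform bound near c₀
  obtain ⟨ε, hε0, hεD⟩ : ∃ ε > 0, closedBall c₀ ε ⊆ D :=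
    (Metric.nhds_basis_closedBall.mem_iff).1 (hDo.mem_nhds hc₀)
  obtain ⟨M, hM⟩ := IsCompact.exists_bound_of_continuousOn
    ((isCompact_closedBall c₀ ε).prod (isCompact_sphere z₁ R))
    (hcont.mono (prod_mono hεD (sphere_subset_closedBall.trans hRU)))
  have hM0 : 0 ≤ M := by
    have := hM (c₀, circleMap z₁ R 0) (mk_mem_prod (mem_closedBall_self hε0.le)
      (circleMap_mem_sphere z₁ hR.le 0))
    exact (norm_nonneg _).trans this
  set q : ℝ := ‖z - z₁‖ / R with hq
  have hq0 : 0 ≤ q := by positivity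
  have hq1 : q < 1 := by
    rw [hq, div_lt_one hR]
    simpa [dist_eq_norm] using hz
  have hu : Summable (fun n => M * q ^ n) := (summable_geometric_of_lt_one hq0 hq1).mul_left M
  have hfu : ∀ (n : ℕ), ∀ c ∈ closedBall c₀ ε, ‖f n c‖ ≤ M * q ^ n := by
    intro n c hc
    have hcD : c ∈ D := hεD hc
    have hint : ∀ θ ∈ Set.Icc (0:ℝ) (2 * Real.pi), ‖G c (circleMap z₁ R θ)‖ ≤ M := fun θ _ =>
      hM (c, circleMap z₁ R θ) (mk_mem_prod hc (circleMap_mem_sphere z₁ hR.le θ))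
    have hcont' : Continuous fun θ : ℝ => ‖G c (circleMap z₁ R θ)‖ := by
      have h1 : ContinuousOn (fun w => G c w) U := by
        have := hcont.comp (f := fun w : ℂ => ((c, w) : ℂ × ℂ))
          (continuous_const.prodMk continuous_id).continuousOn
          (fun w hw => mk_mem_prod hcD hw)
        exact this
      exact ((h1.comp_continuous (continuous_circleMap _ _)
        (fun θ => hRU (circleMap_mem_closedBall z₁ hR.le θ))).norm)
    have hInt : (∫ θ in (0:ℝ)..2 * Real.pi, ‖G c (circleMap z₁ R θ)‖) ≤ 2 * Real.pi * M := by
      calc (∫ θ in (0:ℝ)..2 * Real.pi, ‖G c (circleMap z₁ R θ)‖)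
          ≤ ∫ _ in (0:ℝ)..2 * Real.pi, M := by
            apply intervalIntegral.integral_mono_on Real.two_pi_pos.le
              (hcont'.intervalIntegrable _ _) (intervalIntegrable_const) hint
        _ = 2 * Real.pi * M := by simp [mul_comm]
      -- done
    have hnorm : ‖cauchyPowerSeries (G c) z₁ R n‖ ≤
        ((2 * Real.pi)⁻¹ * ∫ θ in (0:ℝ)..2 * Real.pi, ‖G c (circleMap z₁ R θ)‖) * |R|⁻¹ ^ n :=
      norm_cauchyPowerSeries_le (G c) z₁ R n
    have happ : f n c = cauchyPowerSeries (G c) z₁ R n (fun _ => z - z₁) := by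
      rw [hps c hcD]
    rw [happ]
    calc ‖cauchyPowerSeries (G c) z₁ R n (fun _ => z - z₁)‖
        ≤ ‖cauchyPowerSeries (G c) z₁ R n‖ * ∏ _i : Fin n, ‖z - z₁‖ :=
          (cauchyPowerSeries (G c) z₁ R n).le_opNorm _
      _ = ‖cauchyPowerSeries (G c) z₁ R n‖ * ‖z - z₁‖ ^ n := by
          simp [Finset.prod_const]
      _ ≤ (((2 * Real.pi)⁻¹ * ∫ θ in (0:ℝ)..2 * Real.pi, ‖G c (circleMap z₁ R θ)‖) * |R|⁻¹ ^ n)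
            * ‖z - z₁‖ ^ n := by
          gcongr
      _ ≤ (((2 * Real.pi)⁻¹ * (2 * Real.pi * M)) * |R|⁻¹ ^ n) * ‖z - z₁‖ ^ n := by
          gcongr
      _ = M * q ^ n := by
          rw [abs_of_pos hR, hq, div_pow, inv_pow]
          have h2π : (2 * Real.pi) ≠ 0 := by positivity
          field_simp
  have htu : TendstoUniformlyOn (fun N => fun c => ∑ n ∈ Finset.range N, f n c)
      (fun c => G c z) atTop (closedBall c₀ ε) := by
    apply (tendstoUniformlyOn_tsum_nat hu hfu).congr_right
    intro c hc
    exact ((hGz c (hεD hc)).tsum_eq)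
  have hdiffOn : DifferentiableOn ℂ (fun c => G c z) (ball c₀ ε) := by
    apply TendstoLocallyUniformlyOn.differentiableOn
      ((htu.tendstoLocallyUniformlyOn).mono ball_subset_closedBall)
    · filter_upwards with N
      exact DifferentiableOn.fun_sum fun n _ => ((hfd n).mono (ball_subset_closedBall.trans hεD))
    · exact isOpen_ball
  exact ((hdiffOn c₀ (mem_ball_self hε0)).differentiableAt
    (isOpen_ball.mem_nhds (mem_ball_self hε0))).differentiableWithinAt


theorem stmt17 (U V : Set ℂ) (hU : IsOpen U) (hUc : IsConnected U)
    (hV : IsOpen V) (hVne : V.Nonempty) (hVU : V ⊆ U)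
    (D : Set ℂ) (hD : D = Metric.ball (0 : ℂ) 1)
    (G : ℂ → ℂ → ℂ)
    (hcont : ContinuousOn (fun p : ℂ × ℂ => G p.1 p.2) (D ×ˢ U))
    (hholz : ∀ c ∈ D, DifferentiableOn ℂ (G c) U)
    (hholc : ∀ z ∈ V, DifferentiableOn ℂ (fun c => G c z) D) :
    ∀ z ∈ U, DifferentiableOn ℂ (fun c => G c z) D := by
  have hDo : IsOpen D := hD ▸ isOpen_ball
  set S : Set ℂ := {z | z ∈ U ∧ DifferentiableOn ℂ (fun c => G c z) D} with hS
  set T : Set ℂ := interior S with hT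
  have hTS : T ⊆ S := interior_subset
  have hTopen : IsOpen T := isOpen_interior
  have hVS : V ⊆ S := fun z hz => ⟨hVU hz, hholc z hz⟩
  have hVT : V ⊆ T := fun z hz => mem_interior_iff_mem_nhds.2 (Filter.mem_of_superset
    (hV.mem_nhds hz) hVS)
  have hBopen : IsOpen (U \ closure T) := hU.sdiff isClosed_closure
  -- cover : U ⊆ T ∪ (U \ closure T)
  have hcover : U ⊆ T ∪ (U \ closure T) := by
    intro z hzU
    by_cases hcl : z ∈ closure T
    · left
      -- propagate using stepLemma
      obtain ⟨R₀, hR₀, hR₀U⟩ : ∃ r > 0, Metric.closedBall z r ⊆ U :=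
        (Metric.nhds_basis_closedBall.mem_iff).1 (hU.mem_nhds hzU)
      obtain ⟨z₁, hz₁T, hz₁d⟩ : ∃ z₁ ∈ T, dist z₁ z < R₀ / 4 := by
        have := Metric.mem_closure_iff.1 hcl (R₀ / 4) (by positivity)
        obtain ⟨z₁, hz₁, hd⟩ := this
        exact ⟨z₁, hz₁, by rwa [dist_comm]⟩
      obtain ⟨r₁, hr₁0, hr₁⟩ : ∃ r₁ > 0, Metric.ball z₁ r₁ ⊆ S := by
        obtain ⟨t, hts, hto, hzt⟩ := mem_interior.1 hz₁T
        obtain ⟨r₁, hr₁0, hball⟩ := Metric.isOpen_iff.1 hto z₁ hzt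
        exact ⟨r₁, hr₁0, hball.trans hts⟩
      set ρ : ℝ := min r₁ (R₀ / 4) with hρdef
      have hρ0 : 0 < ρ := lt_min hr₁0 (by positivity)
      have hρR : ρ < R₀ / 2 := lt_of_le_of_lt (min_le_right _ _) (by linarith)
      have hRU : Metric.closedBall z₁ (R₀ / 2) ⊆ U := by
        intro x hx
        apply hR₀U
        simp only [Metric.mem_closedBall] at *
        calc dist x z ≤ dist x z₁ + dist z₁ z := dist_triangle _ _ _
          _ ≤ R₀ / 2 + R₀ / 4 := by gcongr
          _ ≤ R₀ := by linarith
      have hsmall : ∀ w ∈ Metric.ball z₁ ρ, DifferentiableOn ℂ (fun c => G c w) D := by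
        intro w hw
        exact (hr₁ (Metric.ball_subset_ball (min_le_left _ _) hw)).2
      have hstep := stepLemma hU hDo hcont hholz hρ0 hρR hRU hsmall
      have hballS : Metric.ball z₁ (R₀ / 2) ⊆ S := by
        intro w hw
        exact ⟨hRU (Metric.ball_subset_closedBall hw), hstep w hw⟩
      have hzmem : z ∈ Metric.ball z₁ (R₀ / 2) := by
        simp only [Metric.mem_ball]
        rw [dist_comm]
        linarith
      exact mem_interior_iff_mem_nhds.2
        (Filter.mem_of_superset (Metric.isOpen_ball.mem_nhds hzmem) hballS)
    · exact Or.inr ⟨hzU, hcl⟩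
  have hdisj : Disjoint T (U \ closure T) :=
    Set.disjoint_left.2 fun x hxT hxB => hxB.2 (subset_closure hxT)
  obtain ⟨v, hv⟩ := hVne
  have hne : (U ∩ T).Nonempty := ⟨v, hVU hv, hVT hv⟩
  have hUT : U ⊆ T := IsPreconnected.subset_left_of_subset_union hTopen hBopen hdisj hcover hne
    hUc.isPreconnected
  intro z hz
  exact (hTS (hUT hz)).2
end
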